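/- arXiv:math/0212248 — 2 statements merged into one kernel-verified Lean document; each statement's English description precedes it below -/
import Mathlib

section
/- Let 𝒜 = {H_1, …, H_d} be an essential affine hyperplane arrangement in ℂ^{n+1}, with H_i = {ℓ_i = 0} for affine-linear forms ℓ_i, let e_1, …, e_d be positive integers, set f_e = ∏_{i=1}^d ℓ_i^{e_i} and d_e = e_1 + … + e_d, and let X = ∪_i H_i = f_e^{-1}(0). Assume either n > 1, or n = 1 and d_e > d. Then f_e is M_0-tame: for every sequence (z^k) of points of M(f_e) \ X with ‖z^k‖ → ∞, where M(f_e) = {x ∈ ℂ^{n+1} : grad f_e(x) = c·x̄ for some c ∈ ℂ}, one has |f_e(z^k)| → ∞. -/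
open Filter

/-- The affine-linear polynomial `ℓ i = b i + ∑ t, (a i t) * X t` defining the hyperplane `H i`
in `ℂ^N`. -/
noncomputable def hypEq {N d : ℕ} (a : Fin d → Fin N → ℂ) (b : Fin d → ℂ) (i : Fin d) :
    MvPolynomial (Fin N) ℂ :=
  MvPolynomial.C (b i) + ∑ t : Fin N, MvPolynomial.C (a i t) * MvPolynomial.X t

/-- The set `M(g) = {x : grad g (x) = c·x̄ for some c ∈ ℂ}`. -/
def Mset {N : ℕ} (g : MvPolynomial (Fin N) ℂ) : Set (Fin N → ℂ) :=
  {x | ∃ c : ℂ, ∀ j, MvPolynomial.eval x (MvPolynomial.pderiv j g) = c * (starRingEnd ℂ) (x j)}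

open MvPolynomial Topology

lemma eval_hypEq {N d : ℕ} (a : Fin d → Fin N → ℂ) (b : Fin d → ℂ) (i : Fin d)
    (x : Fin N → ℂ) : eval x (hypEq a b i) = b i + ∑ t, a i t * x t := by
  simp [hypEq]

lemma pderiv_hypEq {N d : ℕ} (a : Fin d → Fin N → ℂ) (b : Fin d → ℂ) (i : Fin d) (j : Fin N) :
    pderiv j (hypEq a b i) = C (a i j) := by
  simp only [hypEq, map_add, pderiv_C, map_sum, pderiv_C_mul, pderiv_X, zero_add]
  rw [Finset.sum_eq_single j]
  · simp
  · intro t _ ht; simp [Pi.single_eq_of_ne ht]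
  · simp

lemma eval_pderiv_pow {N d : ℕ} (a : Fin d → Fin N → ℂ) (b : Fin d → ℂ) (i : Fin d) (j : Fin N)
    (x : Fin N → ℂ) (m : ℕ) :
    eval x (pderiv j (hypEq a b i ^ m)) * eval x (hypEq a b i)
      = (m : ℂ) * eval x (hypEq a b i) ^ m * a i j := by
  induction m with
  | zero => simp
  | succ m ih =>
    rw [pow_succ, pderiv_mul, pderiv_hypEq, map_add, map_mul, map_mul, eval_C]
    push_cast
    rw [show eval x (hypEq a b i ^ m) = (eval x (hypEq a b i))^m from map_pow _ _ _]
    linear_combination (eval x (hypEq a b i)) * ih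

lemma eval_pderiv_prod {N d : ℕ} (a : Fin d → Fin N → ℂ) (b : Fin d → ℂ) (e : Fin d → ℕ)
    (j : Fin N) (x : Fin N → ℂ) (s : Finset (Fin d)) (hx : ∀ i, eval x (hypEq a b i) ≠ 0) :
    eval x (pderiv j (∏ i ∈ s, hypEq a b i ^ e i))
      = (∏ i ∈ s, eval x (hypEq a b i) ^ e i)
        * ∑ i ∈ s, (e i : ℂ) * a i j / eval x (hypEq a b i) := by
  classical
  induction s using Finset.induction with
  | empty => simp
  | insert i s hns ih =>
    rw [Finset.prod_insert hns, Finset.sum_insert hns, Finset.prod_insert hns, pderiv_mul,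
      map_add, map_mul, map_mul, ih,
      show eval x (hypEq a b i ^ e i) = (eval x (hypEq a b i))^ e i from map_pow _ _ _]
    have h3 := eval_pderiv_pow a b i j x (e i)
    have hxi := hx i
    have key : eval x (pderiv j (hypEq a b i ^ e i))
        = (e i : ℂ) * (eval x (hypEq a b i)) ^ e i * a i j / eval x (hypEq a b i) := by
      rw [eq_div_iff hxi]; linear_combination h3
    rw [key]
    field_simp
    simp only [map_prod, map_pow]
    ring

lemma ultra_limit {E : Type*} [NormedAddCommGroup E] [ProperSpace E] (U : Ultrafilter ℕ)
    (w : ℕ → E) (R : ℝ) (h : {k | ‖w k‖ ≤ R} ∈ U) : ∃ x, Tendsto w (↑U) (𝓝 x) := by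
  have hle : (↑(U.map w) : Filter E) ≤ 𝓟 (Metric.closedBall 0 R) := by
    rw [Filter.le_principal_iff]
    change Metric.closedBall 0 R ∈ Ultrafilter.map w U
    rw [Ultrafilter.mem_map]
    refine Filter.mem_of_superset h ?_
    intro k hk
    simpa [Metric.mem_closedBall, dist_zero_right] using hk
  obtain ⟨x, -, hx⟩ := (isCompact_closedBall (0:E) R).ultrafilter_le_nhds (U.map w) hle
  exact ⟨x, hx⟩

lemma dichotomy (U : Ultrafilter ℕ) (g : ℕ → ℂ) :
    (∃ γ, Tendsto g (↑U) (𝓝 γ)) ∨ Tendsto (fun k => ‖g k‖) (↑U) atTop := by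
  by_cases h : Tendsto (fun k => ‖g k‖) (↑U) atTop
  · exact Or.inr h
  · left
    rw [tendsto_atTop] at h
    push_neg at h
    obtain ⟨R, hR⟩ := h
    have h3 : {k | R ≤ ‖g k‖}ᶜ ∈ U := by
      filter_upwards [hR] with k hk
      exact not_le.mpr hk
    have h4 : {k | ‖g k‖ ≤ R} ∈ U := by
      refine Filter.mem_of_superset h3 ?_
      intro k hk
      exact le_of_lt (not_le.mp (by simpa using hk))
    exact ultra_limit U g R h4

lemma finset_prod_atTop {ι : Type*} (s : Finset ι) (hs : s.Nonempty) (f : ι → ℕ → ℝ)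
    (l : Filter ℕ) (h : ∀ i ∈ s, Tendsto (f i) l atTop) :
    Tendsto (fun k => ∏ i ∈ s, f i k) l atTop := by
  induction hs using Finset.Nonempty.cons_induction with
  | singleton i => simpa using h i (by simp)
  | cons i s his hs ih =>
    rw [show (fun k => ∏ j ∈ Finset.cons i s his, f j k)
        = fun k => f i k * ∏ j ∈ s, f j k by
      funext k; rw [Finset.prod_cons]]
    exact (h i (Finset.mem_cons_self i s)).atTop_mul_atTop₀
      (ih fun j hj => h j (Finset.mem_cons.2 (Or.inr hj)))

/-- for an essential affine arrangement of `d` distinct hyperplanes `ℓ i = 0` in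
`ℂ^{n+1}` and positive multiplicities `e i`, the polynomial `f_e = ∏ i, ℓ i ^ e i` is
`M₀`-tame provided `n > 1`, or `n = 1` and `d_e = ∑ e i > d`: along any sequence of points of
`M(f_e) \ X` (where `X = ∪ H i`) with `‖z^k‖ → ∞` one has `|f_e(z^k)| → ∞`. -/
theorem stmt2 (n d : ℕ) (a : Fin d → Fin (n + 1) → ℂ) (b : Fin d → ℂ) (e : Fin d → ℕ)
    (ha : ∀ i, a i ≠ 0)
    (hdist : ∀ i j : Fin d, i ≠ j →
      {x : Fin (n + 1) → ℂ | MvPolynomial.eval x (hypEq a b i) = 0} ≠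
      {x : Fin (n + 1) → ℂ | MvPolynomial.eval x (hypEq a b j) = 0})
    (hess : Submodule.span ℂ (Set.range a) = (⊤ : Submodule ℂ (Fin (n + 1) → ℂ)))
    (he : ∀ i, 0 < e i)
    (hcond : 1 < n ∨ (n = 1 ∧ d < ∑ i : Fin d, e i)) :
    ∀ z : ℕ → (Fin (n + 1) → ℂ),
      (∀ k, z k ∈ Mset (∏ i : Fin d, hypEq a b i ^ e i) ∧
        z k ∉ ⋃ i : Fin d, {x : Fin (n + 1) → ℂ | MvPolynomial.eval x (hypEq a b i) = 0}) →
      Tendsto (fun k => ‖z k‖) atTop atTop →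
      Tendsto (fun k => ‖MvPolynomial.eval (z k) (∏ i : Fin d, hypEq a b i ^ e i)‖)
        atTop atTop := by
  classical
  intro z hz hnorm
  set Lf : Fin d → ℕ → ℂ := fun i k => eval (z k) (hypEq a b i) with hLf
  set F : ℕ → ℂ := fun k => eval (z k) (∏ i : Fin d, hypEq a b i ^ e i) with hFdef
  have hL0 : ∀ k i, Lf i k ≠ 0 := by
    intro k i
    have h2 := (hz k).2
    simp only [Set.mem_iUnion, Set.mem_setOf_eq, not_exists] at h2
    exact h2 i
  have hFprod : ∀ k, F k = ∏ i : Fin d, (Lf i k) ^ e i := by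
    intro k
    simp only [hFdef, hLf, map_prod, map_pow]
  have hF0 : ∀ k, F k ≠ 0 := by
    intro k
    rw [hFprod k]
    exact Finset.prod_ne_zero_iff.2 fun i _ => pow_ne_zero _ (hL0 k i)
  by_contra hcon
  rw [tendsto_atTop] at hcon
  push_neg at hcon
  obtain ⟨C, hC⟩ := hcon
  simp only [← not_le] at hC
  have hne : (atTop ⊓ 𝓟 {k | ¬ C ≤ ‖F k‖}).NeBot := frequently_iff_neBot.mp hC
  set U : Ultrafilter ℕ := Ultrafilter.of (atTop ⊓ 𝓟 {k | ¬ C ≤ ‖F k‖}) with hUdef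
  have hUle : (↑U : Filter ℕ) ≤ atTop := (Ultrafilter.of_le _).trans inf_le_left
  have hFb : ∀ᶠ k in (↑U : Filter ℕ), ‖F k‖ < C := by
    have h1 : {k | ¬ C ≤ ‖F k‖} ∈ (↑U : Filter ℕ) :=
      (Ultrafilter.of_le _) (inf_le_right (a := atTop) (mem_principal_self _))
    filter_upwards [h1] with k hk
    exact not_le.mp hk
  -- continue
  have hnormU : Tendsto (fun k => ‖z k‖) (↑U : Filter ℕ) atTop := hnorm.mono_left hUle
  have hz1 : ∀ᶠ k in (↑U : Filter ℕ), 1 ≤ ‖z k‖ := hnormU.eventually_ge_atTop 1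
  set uh : ℕ → (Fin (n+1) → ℂ) := fun k => (‖z k‖)⁻¹ • z k with huh
  have huhb : {k | ‖uh k‖ ≤ 1} ∈ U := by
    refine Filter.univ_mem' ?_
    intro k
    simp only [Set.mem_setOf_eq, huh, norm_smul, norm_inv, norm_norm]
    rcases eq_or_ne (‖z k‖) 0 with h0 | h0
    · simp [h0]
    · rw [inv_mul_cancel₀ h0]
  obtain ⟨u, htu⟩ := ultra_limit U uh 1 huhb
  have hucoord : ∀ t, Tendsto (fun k => uh k t) (↑U : Filter ℕ) (𝓝 (u t)) :=
    fun t => tendsto_pi_nhds.mp htu t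
  have hu1 : ‖u‖ = 1 := by
    have h1 : Tendsto (fun k => ‖uh k‖) (↑U : Filter ℕ) (𝓝 ‖u‖) := htu.norm
    have h2 : ∀ᶠ k in (↑U : Filter ℕ), ‖uh k‖ = 1 := by
      filter_upwards [hz1] with k hk
      have h0 : ‖z k‖ ≠ 0 := by positivity
      simp [huh, norm_smul, inv_mul_cancel₀ h0]
    have h3 : Tendsto (fun _ : ℕ => (1:ℝ)) (↑U : Filter ℕ) (𝓝 ‖u‖) :=
      h1.congr' (h2.mono fun k hk => hk)
    exact tendsto_nhds_unique h3 tendsto_const_nhds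
  -- the index dichotomy
  set P : Fin d → Prop := fun i => ∃ γ, Tendsto (fun k => Lf i k) (↑U : Filter ℕ) (𝓝 γ)
    with hPdef
  set γ : Fin d → ℂ := fun i => if h : P i then h.choose else 0 with hγdef
  have hγ : ∀ i, P i → Tendsto (fun k => Lf i k) (↑U : Filter ℕ) (𝓝 (γ i)) := by
    intro i hi
    simpa [hγdef, dif_pos hi] using hi.choose_spec
  have hJ : ∀ i, ¬ P i → Tendsto (fun k => ‖Lf i k‖) (↑U : Filter ℕ) atTop := by
    intro i hi
    rcases dichotomy U (fun k => Lf i k) with h | h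
    · exact absurd h hi
    · exact h
  -- orthogonality for bounded indices
  have hrinv : Tendsto (fun k => ((‖z k‖:ℂ))⁻¹) (↑U : Filter ℕ) (𝓝 0) := by
    rw [tendsto_zero_iff_norm_tendsto_zero]
    have : (fun k => ‖((‖z k‖:ℂ))⁻¹‖) = fun k => (‖z k‖)⁻¹ := by
      funext k
      rw [norm_inv, Complex.norm_real, Real.norm_of_nonneg (norm_nonneg _)]
    rw [this]
    exact hnormU.inv_tendsto_atTop
  have horth : ∀ i, P i → ∑ t, a i t * u t = 0 := by
    intro i hi
    have h1 : Tendsto (fun k => ∑ t, a i t * uh k t) (↑U : Filter ℕ) (𝓝 (∑ t, a i t * u t)) :=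
      tendsto_finset_sum _ fun t _ => (hucoord t).const_mul _
    have h2 : ∀ᶠ k in (↑U : Filter ℕ),
        (∑ t, a i t * uh k t) = ((‖z k‖:ℂ))⁻¹ * (Lf i k - b i) := by
      filter_upwards [hz1] with k hk
      have h0 : (‖z k‖:ℂ) ≠ 0 := by
        simp only [ne_eq, Complex.ofReal_eq_zero]
        positivity
      have hval : Lf i k = b i + ∑ t, a i t * z k t := eval_hypEq a b i (z k)
      rw [hval, add_sub_cancel_left, Finset.mul_sum]
      refine Finset.sum_congr rfl fun t _ => ?_
      simp only [huh, Pi.smul_apply, Complex.real_smul, Complex.ofReal_inv]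
      ring
    have h3 : Tendsto (fun k => ((‖z k‖:ℂ))⁻¹ * (Lf i k - b i)) (↑U : Filter ℕ)
        (𝓝 (0 * (γ i - b i))) := hrinv.mul ((hγ i hi).sub tendsto_const_nhds)
    rw [zero_mul] at h3
    exact tendsto_nhds_unique (h1.congr' (h2.mono fun k hk => hk)) h3
  -- linear functional machinery
  set ℓfun : Fin d → ((Fin (n+1) → ℂ) →ₗ[ℂ] ℂ) :=
    fun i => ∑ t, a i t • LinearMap.proj t with hℓfun
  have hℓfun_apply : ∀ i x, ℓfun i x = ∑ t, a i t * x t := by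
    intro i x
    simp [hℓfun, LinearMap.sum_apply, LinearMap.smul_apply, LinearMap.proj_apply, smul_eq_mul]
  -- existence of an unbounded index
  have hj0 : ∃ j0, ¬ P j0 := by
    by_contra hall
    push_neg at hall
    set φ : (Fin (n+1) → ℂ) →ₗ[ℂ] ℂ := ∑ t, u t • LinearMap.proj t with hφ
    have hφ_apply : ∀ x, φ x = ∑ t, u t * x t := by
      intro x
      simp [hφ, LinearMap.sum_apply, LinearMap.smul_apply, LinearMap.proj_apply, smul_eq_mul]
    have hker : Submodule.span ℂ (Set.range a) ≤ LinearMap.ker φ := by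
      rw [Submodule.span_le]
      rintro - ⟨i, rfl⟩
      rw [SetLike.mem_coe, LinearMap.mem_ker, hφ_apply]
      rw [← horth i (hall i)]
      exact Finset.sum_congr rfl fun t _ => mul_comm _ _
    rw [hess, top_le_iff] at hker
    have hu0 : u = 0 := by
      funext t
      have h1 : φ (Pi.single t 1) = 0 := by
        rw [← LinearMap.mem_ker, hker]; trivial
      rw [hφ_apply] at h1
      simpa [Pi.single_apply, Finset.sum_ite_eq', mul_comm] using h1
    rw [hu0, norm_zero] at hu1
    exact one_ne_zero hu1.symm
  obtain ⟨j0, hj0P⟩ := hj0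
  -- M-set data
  have hMc : ∀ k, ∃ c : ℂ, ∀ j, eval (z k) (pderiv j (∏ i : Fin d, hypEq a b i ^ e i))
      = c * (starRingEnd ℂ) (z k j) := fun k => (hz k).1
  choose c hc using hMc
  set v : ℕ → Fin (n+1) → ℂ := fun k j => ∑ i : Fin d, (e i : ℂ) * a i j / Lf i k with hvdef
  have hvc : ∀ k j, v k j = (c k / F k) * (starRingEnd ℂ) (z k j) := by
    intro k j
    have h1 := hc k j
    rw [eval_pderiv_prod a b e j (z k) Finset.univ (hL0 k)] at h1
    have h2 : F k * v k j = c k * (starRingEnd ℂ) (z k j) := by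
      rw [hvdef]
      rw [← h1, hFprod]
    field_simp [hF0 k] at h2 ⊢
    linear_combination h2
  -- step 9
  set q : ℕ → ℂ := fun k => ∑ t, (starRingEnd ℂ) (uh k t) * u t with hqdef
  set ρ : ℂ := ∑ t, (starRingEnd ℂ) (u t) * u t with hρdef
  have htq : Tendsto q (↑U : Filter ℕ) (𝓝 ρ) := by
    apply tendsto_finset_sum
    intro t _
    exact (((Complex.continuous_conj.tendsto _).comp (hucoord t)).mul tendsto_const_nhds)
  have hρreal : ρ = ((∑ t, Complex.normSq (u t) : ℝ) : ℂ) := by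
    rw [hρdef]
    push_cast
    refine Finset.sum_congr rfl fun t _ => ?_
    rw [← Complex.normSq_eq_conj_mul_self]
  have hρ0 : ρ ≠ 0 := by
    rw [hρreal]
    simp only [ne_eq, Complex.ofReal_eq_zero]
    intro hsum
    have hall : ∀ t ∈ Finset.univ, Complex.normSq (u t) = 0 := by
      rw [← Finset.sum_eq_zero_iff_of_nonneg (fun t _ => Complex.normSq_nonneg (u t))]
      exact hsum
    have hu0 : u = 0 := by
      funext t
      exact Complex.normSq_eq_zero.mp (hall t (Finset.mem_univ t))
    rw [hu0, norm_zero] at hu1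
    exact one_ne_zero hu1.symm
  set D : ℕ → ℂ := fun k => ∑ t, v k t * u t with hDdef
  have hD1 : ∀ k, D k = ∑ i : Fin d, ((e i : ℂ) / Lf i k) * (∑ t, a i t * u t) := by
    intro k
    rw [hDdef]
    simp only [hvdef]
    calc (∑ t, (∑ i : Fin d, (e i : ℂ) * a i t / Lf i k) * u t)
        = ∑ t, ∑ i : Fin d, ((e i : ℂ) * a i t / Lf i k) * u t := by
          refine Finset.sum_congr rfl fun t _ => ?_
          rw [Finset.sum_mul]
      _ = ∑ i : Fin d, ∑ t, ((e i : ℂ) * a i t / Lf i k) * u t := Finset.sum_comm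
      _ = ∑ i : Fin d, ((e i : ℂ) / Lf i k) * (∑ t, a i t * u t) := by
          refine Finset.sum_congr rfl fun i _ => ?_
          rw [Finset.mul_sum]
          refine Finset.sum_congr rfl fun t _ => ?_
          ring
  have hDto0 : Tendsto D (↑U : Filter ℕ) (𝓝 0) := by
    have h0 : Tendsto (fun k => ∑ i : Fin d, ((e i : ℂ) / Lf i k) * (∑ t, a i t * u t))
        (↑U : Filter ℕ) (𝓝 (∑ i : Fin d, (0:ℂ))) := by
      apply tendsto_finset_sum
      intro i _
      by_cases hi : P i
      · have : (fun k => ((e i : ℂ) / Lf i k) * (∑ t, a i t * u t)) = fun _ => 0 := by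
          funext k
          rw [horth i hi, mul_zero]
        rw [this]
        exact tendsto_const_nhds
      · have hinv : Tendsto (fun k => (Lf i k)⁻¹) (↑U : Filter ℕ) (𝓝 0) := by
          rw [tendsto_zero_iff_norm_tendsto_zero]
          simp only [norm_inv]
          exact (hJ i hi).inv_tendsto_atTop
        have h2 : Tendsto (fun k => ((e i : ℂ) / Lf i k) * (∑ t, a i t * u t))
            (↑U : Filter ℕ) (𝓝 (((e i : ℂ) * 0) * (∑ t, a i t * u t))) := by
          apply Tendsto.mul_const
          simp only [div_eq_mul_inv]
          exact tendsto_const_nhds.mul hinv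
        simpa using h2
    rw [Finset.sum_const, smul_zero] at h0
    exact Tendsto.congr (fun k => (hD1 k).symm) h0
  have hD2 : ∀ᶠ k in (↑U : Filter ℕ), D k = (c k / F k) * ((‖z k‖:ℂ)) * q k := by
    filter_upwards [hz1] with k hk
    have h0 : (‖z k‖:ℝ) ≠ 0 := by positivity
    rw [hDdef, hqdef]
    simp only
    rw [Finset.mul_sum]
    refine Finset.sum_congr rfl fun t _ => ?_
    rw [hvc k t]
    have hzt : z k t = (‖z k‖:ℂ) * uh k t := by
      simp only [huh, Pi.smul_apply, Complex.real_smul, Complex.ofReal_inv]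
      rw [← mul_assoc, mul_inv_cancel₀ (by exact_mod_cast h0), one_mul]
    rw [hzt, map_mul, Complex.conj_ofReal]
    ring
  have hqne : ∀ᶠ k in (↑U : Filter ℕ), q k ≠ 0 := htq.eventually_ne hρ0
  have hg : Tendsto (fun k => (c k / F k) * ((‖z k‖:ℂ))) (↑U : Filter ℕ) (𝓝 0) := by
    have hdiv : Tendsto (fun k => D k / q k) (↑U : Filter ℕ) (𝓝 (0 / ρ)) :=
      hDto0.div htq hρ0
    rw [zero_div] at hdiv
    apply hdiv.congr'
    filter_upwards [hD2, hqne] with k h1 h2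
    rw [h1, mul_div_assoc, div_self h2, mul_one]
  have hvto0 : ∀ t, Tendsto (fun k => v k t) (↑U : Filter ℕ) (𝓝 0) := by
    intro t
    apply squeeze_zero_norm (a := fun k => ‖(c k / F k) * ((‖z k‖:ℂ))‖)
    · intro k
      rw [hvc k t, norm_mul, RCLike.norm_conj, norm_mul]
      apply mul_le_mul_of_nonneg_left _ (norm_nonneg _)
      calc ‖z k t‖ ≤ ‖z k‖ := norm_le_pi_norm (z k) t
        _ = ‖((‖z k‖:ℂ))‖ := by rw [Complex.norm_real, Real.norm_of_nonneg (norm_nonneg _)]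
    · simpa using hg.norm
  -- steps 11-12
  set S' : Finset (Fin d) := Finset.univ.filter P with hS'def
  have hcompl : ∀ t, Tendsto
      (fun k => ∑ i ∈ Finset.univ.filter (fun i => ¬ P i), (e i : ℂ) * a i t / Lf i k)
      (↑U : Filter ℕ) (𝓝 0) := by
    intro t
    have h0 : Tendsto
        (fun k => ∑ i ∈ Finset.univ.filter (fun i => ¬ P i), (e i : ℂ) * a i t / Lf i k)
        (↑U : Filter ℕ) (𝓝 (∑ i ∈ Finset.univ.filter (fun i => ¬ P i), (0:ℂ))) := by
      apply tendsto_finset_sum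
      intro i hi
      rw [Finset.mem_filter] at hi
      have hinv : Tendsto (fun k => (Lf i k)⁻¹) (↑U : Filter ℕ) (𝓝 0) := by
        rw [tendsto_zero_iff_norm_tendsto_zero]
        simp only [norm_inv]
        exact (hJ i hi.2).inv_tendsto_atTop
      have h2 : Tendsto (fun k => ((e i : ℂ) * a i t) * (Lf i k)⁻¹)
          (↑U : Filter ℕ) (𝓝 (((e i : ℂ) * a i t) * 0)) := tendsto_const_nhds.mul hinv
      rw [mul_zero] at h2
      apply h2.congr
      intro k
      rw [mul_div_assoc]
      ring
    simpa using h0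
  have hS'sum : ∀ t, Tendsto (fun k => ∑ i ∈ S', (e i : ℂ) * a i t / Lf i k)
      (↑U : Filter ℕ) (𝓝 0) := by
    intro t
    have hsplit : ∀ k, (∑ i ∈ S', (e i : ℂ) * a i t / Lf i k)
        = v k t - ∑ i ∈ Finset.univ.filter (fun i => ¬ P i), (e i : ℂ) * a i t / Lf i k := by
      intro k
      rw [hvdef]
      simp only
      rw [← Finset.sum_filter_add_sum_filter_not Finset.univ P
        (fun i => (e i : ℂ) * a i t / Lf i k)]
      rw [hS'def]
      ring
    have h1 := (hvto0 t).sub (hcompl t)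
    rw [sub_zero] at h1
    exact Tendsto.congr (fun k => (hsplit k).symm) h1
  set Q : ℕ → ℝ := fun k => ∏ i ∈ Finset.univ.filter (fun i => ¬ P i), ‖Lf i k‖ ^ e i
    with hQdef
  have hQpos : ∀ k, 0 < Q k := by
    intro k
    exact Finset.prod_pos fun i _ => pow_pos (norm_pos_iff.2 (hL0 k i)) _
  have hQtop : Tendsto Q (↑U : Filter ℕ) atTop := by
    apply finset_prod_atTop _ ⟨j0, Finset.mem_filter.2 ⟨Finset.mem_univ _, hj0P⟩⟩
    intro i hi
    rw [Finset.mem_filter] at hi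
    have hp : Tendsto (fun x : ℝ => x ^ e i) atTop atTop :=
      tendsto_pow_atTop (he i).ne'
    exact hp.comp (hJ i hi.2)
  have habsF : ∀ k, ‖F k‖ = (∏ i ∈ S', ‖Lf i k‖ ^ e i) * Q k := by
    intro k
    rw [hFprod]
    rw [show ‖∏ i : Fin d, Lf i k ^ e i‖ = ∏ i : Fin d, ‖Lf i k‖ ^ e i by
      rw [norm_prod]
      exact Finset.prod_congr rfl fun i _ => norm_pow _ _]
    rw [hQdef, hS'def]
    exact (Finset.prod_filter_mul_prod_filter_not Finset.univ P _).symm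
  have hP'0 : Tendsto (fun k => ∏ i ∈ S', ‖Lf i k‖ ^ e i) (↑U : Filter ℕ) (𝓝 0) := by
    have hCQ : Tendsto (fun k => C * (Q k)⁻¹) (↑U : Filter ℕ) (𝓝 (C * 0)) :=
      tendsto_const_nhds.mul hQtop.inv_tendsto_atTop
    rw [mul_zero] at hCQ
    apply squeeze_zero' (Filter.Eventually.of_forall fun k =>
      Finset.prod_nonneg fun i _ => pow_nonneg (norm_nonneg _) _) _ hCQ
    filter_upwards [hFb] with k hk
    have h1 : (∏ i ∈ S', ‖Lf i k‖ ^ e i) * Q k < C := by rw [← habsF k]; exact hk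
    have h2 := h1.le
    rw [← le_div_iff₀ (hQpos k), div_eq_mul_inv] at h2
    exact h2
  have hP'γ : Tendsto (fun k => ∏ i ∈ S', ‖Lf i k‖ ^ e i) (↑U : Filter ℕ)
      (𝓝 (∏ i ∈ S', ‖γ i‖ ^ e i)) := by
    apply tendsto_finset_prod
    intro i hi
    rw [hS'def, Finset.mem_filter] at hi
    exact ((hγ i hi.2).norm).pow (e i)
  have hprod0 : (∏ i ∈ S', ‖γ i‖ ^ e i) = 0 := tendsto_nhds_unique hP'γ hP'0
  obtain ⟨i0, hi0S, hi0z⟩ := Finset.prod_eq_zero_iff.mp hprod0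
  have hγi0 : γ i0 = 0 := by
    rw [pow_eq_zero_iff (he i0).ne'] at hi0z
    exact norm_eq_zero.mp hi0z
  have hPi0 : P i0 := (Finset.mem_filter.mp hi0S).2
  -- step 13: the set K and limits of K-partial sums
  set K : Finset (Fin d) := S'.filter (fun i => γ i = 0) with hKdef
  have hi0K : i0 ∈ K := Finset.mem_filter.2 ⟨hi0S, hγi0⟩
  set Wlim : Fin (n+1) → ℂ :=
    fun t => - ∑ i ∈ S'.filter (fun i => ¬ γ i = 0), (e i : ℂ) * a i t / γ i with hWlimdef
  have hKP : ∀ i ∈ K, P i := by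
    intro i hi
    exact (Finset.mem_filter.mp (Finset.mem_filter.mp hi).1).2
  have hWt : ∀ t, Tendsto (fun k => ∑ i ∈ K, (e i : ℂ) * a i t / Lf i k)
      (↑U : Filter ℕ) (𝓝 (Wlim t)) := by
    intro t
    have hSK : Tendsto (fun k => ∑ i ∈ S'.filter (fun i => ¬ γ i = 0),
        (e i : ℂ) * a i t / Lf i k) (↑U : Filter ℕ)
        (𝓝 (∑ i ∈ S'.filter (fun i => ¬ γ i = 0), (e i : ℂ) * a i t / γ i)) := by
      apply tendsto_finset_sum
      intro i hi
      rw [Finset.mem_filter] at hi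
      have hiP : P i := (Finset.mem_filter.mp hi.1).2
      exact Tendsto.div tendsto_const_nhds (hγ i hiP) hi.2
    have hsplit : ∀ k, (∑ i ∈ K, (e i : ℂ) * a i t / Lf i k)
        = (∑ i ∈ S', (e i : ℂ) * a i t / Lf i k)
          - ∑ i ∈ S'.filter (fun i => ¬ γ i = 0), (e i : ℂ) * a i t / Lf i k := by
      intro k
      rw [← Finset.sum_filter_add_sum_filter_not S' (fun i => γ i = 0)
        (fun i => (e i : ℂ) * a i t / Lf i k), hKdef]
      ring
    have h1 := (hS'sum t).sub hSK
    rw [zero_sub] at h1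
    exact Tendsto.congr (fun k => (hsplit k).symm) h1
  -- step 14: make the bounded transverse sequence via a linear right inverse
  set A : (Fin (n+1) → ℂ) →ₗ[ℂ] ({i : Fin d // P i} → ℂ) :=
    LinearMap.pi (fun i => ℓfun i.1) with hAdef
  have hA_apply : ∀ x (i : {i : Fin d // P i}), A x i = ℓfun i.1 x := fun x i => rfl
  obtain ⟨B, hB⟩ := (A.rangeRestrict).exists_rightInverse_of_surjective
    (LinearMap.range_rangeRestrict A)
  have hABr : ∀ r : LinearMap.range A, A (B r) = r.1 := by
    intro r
    have h1 : A.rangeRestrict (B r) = r := by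
      rw [← LinearMap.comp_apply, hB, LinearMap.id_apply]
    have h2 := congrArg Subtype.val h1
    simpa using h2
  set y : ℕ → (Fin (n+1) → ℂ) := fun k => B (A.rangeRestrict (z k)) with hydef
  have hyA : ∀ k, A (y k) = A (z k) := by
    intro k
    rw [hydef]
    have := hABr (A.rangeRestrict (z k))
    simpa using this
  have hℓz : ∀ (i : Fin d) k, ℓfun i (z k) = Lf i k - b i := by
    intro i k
    rw [hℓfun_apply, hLf]
    simp only
    rw [eval_hypEq a b i (z k)]
    ring
  set gstar : {i : Fin d // P i} → ℂ := fun i => γ i.1 - b i.1 with hgstardef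
  have hAz : Tendsto (fun k => A (z k)) (↑U : Filter ℕ) (𝓝 gstar) := by
    rw [tendsto_pi_nhds]
    intro i
    have h1 : (fun k => A (z k) i) = fun k => Lf i.1 k - b i.1 := by
      funext k
      rw [hA_apply, hℓz]
    rw [h1]
    exact (hγ i.1 i.2).sub tendsto_const_nhds
  have hgR : gstar ∈ LinearMap.range A := by
    have hcl : IsClosed ((LinearMap.range A : Submodule ℂ ({i : Fin d // P i} → ℂ)) :
        Set ({i : Fin d // P i} → ℂ)) := Submodule.closed_of_finiteDimensional _
    exact hcl.mem_of_tendsto hAz (Filter.Eventually.of_forall fun k =>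
      LinearMap.mem_range_self A (z k))
  have hsubt : Tendsto (fun k => A.rangeRestrict (z k)) (↑U : Filter ℕ)
      (𝓝 (⟨gstar, hgR⟩ : LinearMap.range A)) := by
    rw [tendsto_subtype_rng]
    exact hAz
  set ystar : Fin (n+1) → ℂ := B ⟨gstar, hgR⟩ with hystardef
  have hy : Tendsto y (↑U : Filter ℕ) (𝓝 ystar) := by
    have hBc : Continuous B := B.continuous_of_finiteDimensional
    exact (hBc.tendsto _).comp hsubt
  have hycoord : ∀ t, Tendsto (fun k => y k t) (↑U : Filter ℕ) (𝓝 (ystar t)) :=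
    fun t => tendsto_pi_nhds.mp hy t
  have hyst : ∀ i : {i : Fin d // P i}, ℓfun i.1 ystar = γ i.1 - b i.1 := by
    intro i
    have h1 := hABr ⟨gstar, hgR⟩
    have h2 := congrFun h1 i
    rw [hA_apply] at h2
    exact h2
  have hyℓ : ∀ (i : Fin d), P i → ∀ k, ℓfun i (y k) = Lf i k - b i := by
    intro i hi k
    have h1 := congrFun (hyA k) ⟨i, hi⟩
    rw [hA_apply, hA_apply] at h1
    rw [h1]
    exact hℓz i k
  -- step 15: final contradiction
  have hTconst : ∀ k, (∑ t, (∑ i ∈ K, (e i : ℂ) * a i t / Lf i k) * (y k t - ystar t))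
      = ∑ i ∈ K, (e i : ℂ) := by
    intro k
    calc (∑ t, (∑ i ∈ K, (e i : ℂ) * a i t / Lf i k) * (y k t - ystar t))
        = ∑ t, ∑ i ∈ K, ((e i : ℂ) * a i t / Lf i k) * (y k t - ystar t) := by
          refine Finset.sum_congr rfl fun t _ => ?_
          rw [Finset.sum_mul]
      _ = ∑ i ∈ K, ∑ t, ((e i : ℂ) * a i t / Lf i k) * (y k t - ystar t) := Finset.sum_comm
      _ = ∑ i ∈ K, ((e i : ℂ) / Lf i k) * (∑ t, a i t * (y k t - ystar t)) := by
          refine Finset.sum_congr rfl fun i _ => ?_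
          rw [Finset.mul_sum]
          refine Finset.sum_congr rfl fun t _ => ?_
          ring
      _ = ∑ i ∈ K, (e i : ℂ) := by
          refine Finset.sum_congr rfl fun i hi => ?_
          have hiP : P i := hKP i hi
          have hiγ : γ i = 0 := (Finset.mem_filter.mp hi).2
          have hsum : (∑ t, a i t * (y k t - ystar t)) = Lf i k := by
            have h1 : (∑ t, a i t * (y k t - ystar t)) = ℓfun i (y k) - ℓfun i ystar := by
              rw [← map_sub, hℓfun_apply]
              refine Finset.sum_congr rfl fun t _ => ?_
              rw [Pi.sub_apply]
            rw [h1, hyℓ i hiP k, hyst ⟨i, hiP⟩, hiγ]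
            ring
          rw [hsum, div_mul_cancel₀ _ (hL0 k i)]
  have hTto0 : Tendsto (fun k => (∑ t, (∑ i ∈ K, (e i : ℂ) * a i t / Lf i k)
      * (y k t - ystar t))) (↑U : Filter ℕ) (𝓝 (∑ t : Fin (n+1), (0:ℂ))) := by
    apply tendsto_finset_sum
    intro t _
    have h1 : Tendsto (fun k => y k t - ystar t) (↑U : Filter ℕ) (𝓝 0) := by
      have := (hycoord t).sub (tendsto_const_nhds (x := ystar t))
      rwa [sub_self] at this
    have h2 := (hWt t).mul h1
    rwa [mul_zero] at h2
  have hTeq : (∑ i ∈ K, (e i : ℂ)) = 0 := by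
    rw [Finset.sum_const, smul_zero] at hTto0
    exact tendsto_nhds_unique
      ((tendsto_congr (fun k => hTconst k)).mp hTto0) tendsto_const_nhds |>.symm
  have hKsum : (∑ i ∈ K, e i) = 0 := by
    have : ((∑ i ∈ K, e i : ℕ) : ℂ) = 0 := by
      push_cast
      exact hTeq
    exact_mod_cast this
  have he0 : e i0 = 0 := by
    rw [Finset.sum_eq_zero_iff] at hKsum
    exact hKsum i0 hi0K
  exact absurd he0 (he i0).ne'
end

section
/- Let g ∈ ℂ[x_0, …, x_n] be a polynomial and let U : ℂ^{n+1} → ℂ^{n+1} be a unitary linear map (preserving the standard Hermitian inner product). If g is M_0-tame, then the polynomial g∘U (the polynomial whose associated function is x ↦ g(U x)) is also M_0-tame. -/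
open Filter

/-- `g` is M₀-tame: along any sequence in `M(g) \ g⁻¹(0)` with `‖z^k‖ → ∞` one has
`|g(z^k)| → ∞`. -/
def M0Tame {N : ℕ} (g : MvPolynomial (Fin N) ℂ) : Prop :=
  ∀ z : ℕ → (Fin N → ℂ), (∀ k, z k ∈ Mset g ∧ MvPolynomial.eval (z k) g ≠ 0) →
    Tendsto (fun k => ‖z k‖) atTop atTop →
    Tendsto (fun k => ‖MvPolynomial.eval (z k) g‖) atTop atTop

lemma chainRule {N : ℕ} (σ : Fin N → MvPolynomial (Fin N) ℂ)
    (p : MvPolynomial (Fin N) ℂ) (j : Fin N) :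
    MvPolynomial.pderiv j (MvPolynomial.aeval σ p) =
      ∑ i, MvPolynomial.aeval σ (MvPolynomial.pderiv i p) * MvPolynomial.pderiv j (σ i) := by
  induction p using MvPolynomial.induction_on with
  | C a => simp
  | add p q hp hq =>
      simp only [map_add, hp, hq, add_mul, Finset.sum_add_distrib]
  | mul_X p i hp =>
      classical
      open MvPolynomial in
      have key : ∀ k : Fin N, aeval σ (pderiv k (p * X i)) * pderiv j (σ k) =
          (aeval σ (pderiv k p) * pderiv j (σ k)) * σ i
            + (if i = k then aeval σ p * pderiv j (σ k) else 0) := by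
        intro k
        simp only [pderiv_mul, pderiv_X, Pi.single_apply, map_add, map_mul, aeval_X]
        split <;> simp <;> ring
      rw [Finset.sum_congr rfl (fun k _ => key k), Finset.sum_add_distrib,
        Finset.sum_ite_eq, ← Finset.sum_mul]
      simp only [Finset.mem_univ, if_true, map_mul, MvPolynomial.aeval_X,
        MvPolynomial.pderiv_mul, hp]

lemma evalAeval {N : ℕ} (σ : Fin N → MvPolynomial (Fin N) ℂ) (x : Fin N → ℂ)
    (p : MvPolynomial (Fin N) ℂ) :
    MvPolynomial.eval x (MvPolynomial.aeval σ p) =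
      MvPolynomial.eval (fun i => MvPolynomial.eval x (σ i)) p := by
  rw [MvPolynomial.aeval_eq_bind₁]
  exact MvPolynomial.aeval_bind₁ (R := ℂ) (S := ℂ) x σ p


/-- If `g` is an M₀-tame polynomial in `n+1` variables and `U` is a unitary
linear map of `ℂ^{n+1}` (preserving the standard Hermitian inner product), then the polynomial
`g ∘ U` (i.e. the polynomial `h` whose associated function is `x ↦ g (U x)`) is M₀-tame. -/
theorem stmt3 (n : ℕ) (g h : MvPolynomial (Fin (n + 1)) ℂ)
    (U : (Fin (n + 1) → ℂ) →ₗ[ℂ] (Fin (n + 1) → ℂ))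
    (hU : ∀ x y : Fin (n + 1) → ℂ,
      ∑ j : Fin (n + 1), (starRingEnd ℂ) (U x j) * U y j =
      ∑ j : Fin (n + 1), (starRingEnd ℂ) (x j) * y j)
    (hh : ∀ x : Fin (n + 1) → ℂ, MvPolynomial.eval x h = MvPolynomial.eval (U x) g)
    (hg : M0Tame g) : M0Tame h := by
  classical
  set A : Fin (n+1) → Fin (n+1) → ℂ := fun i l => U (Pi.single l 1) i with hA
  have hUx : ∀ (x : Fin (n+1) → ℂ) (i : Fin (n+1)), U x i = ∑ l, A i l * x l := by
    intro x i
    have hx : ∑ l, (x l) • (Pi.single l 1 : Fin (n+1) → ℂ) = x := by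
      ext j
      simp [Pi.single_apply, Finset.sum_ite_eq']
    conv_lhs => rw [← hx]
    simp [map_sum, mul_comm]
    rfl
  set σ : Fin (n+1) → MvPolynomial (Fin (n+1)) ℂ :=
    fun i => ∑ l, MvPolynomial.C (A i l) * MvPolynomial.X l with hσ
  have hσeval : ∀ (x : Fin (n+1) → ℂ) (i : Fin (n+1)), MvPolynomial.eval x (σ i) = U x i := by
    intro x i
    simp [hσ, hUx, map_sum]
  have hσpd : ∀ i j, MvPolynomial.pderiv j (σ i) = MvPolynomial.C (A i j) := by
    intro i j
    simp [hσ, MvPolynomial.pderiv_X, Pi.single_apply, Finset.sum_ite_eq',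
      MvPolynomial.pderiv_C_mul]
  have hEvA : ∀ (x : Fin (n+1) → ℂ) (p : MvPolynomial (Fin (n+1)) ℂ),
      MvPolynomial.eval x (MvPolynomial.aeval σ p) = MvPolynomial.eval (U x) p := by
    intro x p
    rw [evalAeval]
    have hfe : (fun i => MvPolynomial.eval x (σ i)) = U x := funext fun i => hσeval x i
    rw [hfe]
  have hhg : h = MvPolynomial.aeval σ g := by
    apply MvPolynomial.funext
    intro x
    rw [hh, hEvA]
  set MA := (Matrix.of A : Matrix (Fin (n+1)) (Fin (n+1)) ℂ) with hMA
  have hM1 : MA.conjTranspose * MA = 1 := by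
    ext l m
    have := hU (Pi.single l 1) (Pi.single m 1)
    simp only [Pi.single_apply, apply_ite, map_one, map_zero, ite_mul, one_mul, zero_mul,
      mul_ite, mul_one, mul_zero, Finset.sum_ite_eq, Finset.mem_univ, if_true] at this
    simpa [Matrix.mul_apply, Matrix.conjTranspose_apply, hMA, Matrix.one_apply, eq_comm] using this
  have hM2 : MA * MA.conjTranspose = 1 := mul_eq_one_comm.mp hM1
  have key : ∀ k i, (∑ j, A k j * (starRingEnd ℂ) (A i j)) = if k = i then 1 else 0 := by
    intro k i
    have h2 := congr_fun (congr_fun hM2 k) i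
    simpa [Matrix.mul_apply, Matrix.one_apply, Matrix.conjTranspose_apply, hMA] using h2
  have hnormsq : ∀ x : Fin (n+1) → ℂ,
      ∑ j, Complex.normSq (U x j) = ∑ j, Complex.normSq (x j) := by
    intro x
    have := hU x x
    rw [Finset.sum_congr rfl (fun j _ => (Complex.normSq_eq_conj_mul_self (z := U x j)).symm),
      Finset.sum_congr rfl (fun j _ => (Complex.normSq_eq_conj_mul_self (z := x j)).symm)] at this
    exact_mod_cast this
  have hnorm : ∀ x : Fin (n+1) → ℂ, ‖x‖ ≤ Real.sqrt (n+1) * ‖U x‖ := by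
    intro x
    rw [pi_norm_le_iff_of_nonneg (by positivity)]
    intro i
    have h1 : ‖x i‖ ^ 2 ≤ ((n+1 : ℕ) : ℝ) * ‖U x‖ ^ 2 := by
      calc ‖x i‖ ^ 2 = Complex.normSq (x i) := by
              rw [Complex.sq_norm]
        _ ≤ ∑ j, Complex.normSq (x j) :=
              Finset.single_le_sum (fun j _ => Complex.normSq_nonneg _) (Finset.mem_univ i)
        _ = ∑ j, Complex.normSq (U x j) := (hnormsq x).symm
        _ ≤ ∑ _j : Fin (n+1), ‖U x‖ ^ 2 := by
              apply Finset.sum_le_sum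
              intro j _
              rw [← Complex.sq_norm]
              exact pow_le_pow_left₀ (norm_nonneg _) (norm_le_pi_norm (U x) j) 2
        _ = ((n+1 : ℕ) : ℝ) * ‖U x‖ ^ 2 := by simp [mul_comm]
    have h2 := Real.sqrt_le_sqrt h1
    rwa [Real.sqrt_sq (norm_nonneg _), Real.sqrt_mul (by positivity), Real.sqrt_sq (norm_nonneg _),
      Nat.cast_add, Nat.cast_one] at h2
  intro z hz htend
  have hmem : ∀ k, (fun k => U (z k)) k ∈ Mset g ∧
      MvPolynomial.eval ((fun k => U (z k)) k) g ≠ 0 := by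
    intro k
    obtain ⟨⟨c, hc⟩, hne⟩ := hz k
    constructor
    · refine ⟨c, fun i => ?_⟩
      have hGA : ∀ j, (∑ i, MvPolynomial.eval (U (z k)) (MvPolynomial.pderiv i g) * A i j)
          = c * (starRingEnd ℂ) (z k j) := by
        intro j
        have hcj := hc j
        rw [hhg, chainRule] at hcj
        rw [map_sum] at hcj
        simp only [hσpd, map_mul, MvPolynomial.eval_C, ← MvPolynomial.aeval_eq_bind₁, hEvA] at hcj
        exact hcj
      have hstep : MvPolynomial.eval (U (z k)) (MvPolynomial.pderiv i g)
          = ∑ m, MvPolynomial.eval (U (z k)) (MvPolynomial.pderiv m g)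
            * (if m = i then 1 else 0) := by
        simp
      rw [hstep]
      calc ∑ m, MvPolynomial.eval (U (z k)) (MvPolynomial.pderiv m g) * (if m = i then 1 else 0)
          = ∑ m, MvPolynomial.eval (U (z k)) (MvPolynomial.pderiv m g)
              * (∑ j, A m j * (starRingEnd ℂ) (A i j)) := by
            refine Finset.sum_congr rfl fun m _ => by rw [key]
        _ = ∑ j, (∑ m, MvPolynomial.eval (U (z k)) (MvPolynomial.pderiv m g) * A m j)
              * (starRingEnd ℂ) (A i j) := by
            simp_rw [Finset.mul_sum, Finset.sum_mul]
            rw [Finset.sum_comm]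
            simp [mul_assoc]
        _ = ∑ j, (c * (starRingEnd ℂ) (z k j)) * (starRingEnd ℂ) (A i j) := by
            refine Finset.sum_congr rfl fun j _ => by rw [hGA]
        _ = c * (starRingEnd ℂ) (U (z k) i) := by
            rw [hUx, map_sum, Finset.mul_sum]
            refine Finset.sum_congr rfl fun j _ => by rw [map_mul]; ring
    · rw [← hh]
      exact hne
  have htend' : Tendsto (fun k => ‖U (z k)‖) atTop atTop := by
    have hpos : (0:ℝ) < Real.sqrt (n+1) := Real.sqrt_pos.mpr (by positivity)
    refine tendsto_atTop_mono (fun k => ?_) (htend.atTop_div_const hpos)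
    rw [div_le_iff₀ hpos, mul_comm]
    exact hnorm (z k)
  have hfin := hg (fun k => U (z k)) hmem htend'
  simpa [hh] using hfin
end
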